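/- arXiv:2004.07055 — 3 statements merged into one kernel-verified Lean document; each statement's English description precedes it below -/
import Mathlib

section
/- Every nontrivial C¹ diffeomorphism f̄ of a closed interval, viewed inside any finitely generated group of C¹ diffeomorphisms of that interval containing f̄, satisfies: there exists A > 0 such that ‖f̄^n‖ ≥ A log(n) for infinitely many integers n ≥ 1. In particular, no nontrivial C¹ interval diffeomorphism is more than logarithmically distorted. -/
noncomputable def wordLength {G : Type*} [Group G] (S : Set G) (g : G) : ℕ :=
  sInf {n | ∃ l : List G, l.length = n ∧ (∀ x ∈ l, x ∈ S ∨ x⁻¹ ∈ S) ∧ l.prod = g}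

open Set

namespace NSDaux

/-- Every element of the closure is a product of a word in `S ∪ S⁻¹`. -/
lemma exists_word {G : Type*} [Group G] {S : Set G} {g : G} (hg : g ∈ Subgroup.closure S) :
    ∃ l : List G, (∀ x ∈ l, x ∈ S ∨ x⁻¹ ∈ S) ∧ l.prod = g := by
  induction hg using Subgroup.closure_induction with
  | mem x hx => exact ⟨[x], by simp [hx]⟩
  | one => exact ⟨[], by simp⟩
  | mul x y hx hy ihx ihy =>
      obtain ⟨lx, hlx, hpx⟩ := ihx
      obtain ⟨ly, hly, hpy⟩ := ihy
      refine ⟨lx ++ ly, ?_, by simp [hpx, hpy]⟩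
      intro z hz
      rcases List.mem_append.1 hz with h | h
      · exact hlx z h
      · exact hly z h
  | inv x hx ihx =>
      obtain ⟨l, hl, hp⟩ := ihx
      refine ⟨(l.map (fun y => y⁻¹)).reverse, ?_, ?_⟩
      · intro z hz
        simp only [List.mem_reverse, List.mem_map] at hz
        obtain ⟨y, hy, rfl⟩ := hz
        rcases hl y hy with h | h
        · right; simpa using h
        · left; exact h
      · rw [← List.prod_inv_reverse, hp]

lemma word_set_subset {G : Type*} [Group G] (S : Set G) (g : G) :
    {n | ∃ l : List G, l.length = n ∧ (∀ x ∈ l, x ∈ S ∨ x⁻¹ ∈ S) ∧ l.prod = g} ⊆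
      {n | ∃ l : List G, l.length = n ∧ (∀ x ∈ l, x ∈ S ∨ x⁻¹ ∈ S) ∧ l.prod = g⁻¹} := by
  rintro n ⟨l, hlen, hmem, hprod⟩
  refine ⟨(l.map (fun y => y⁻¹)).reverse, by simp [hlen], ?_, ?_⟩
  · intro z hz
    simp only [List.mem_reverse, List.mem_map] at hz
    obtain ⟨y, hy, rfl⟩ := hz
    rcases hmem y hy with h | h
    · right; simpa using h
    · left; exact h
  · rw [← List.prod_inv_reverse, hprod]

lemma wordLength_inv {G : Type*} [Group G] (S : Set G) (g : G) :
    wordLength S g⁻¹ = wordLength S g := by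
  unfold wordLength
  congr 1
  apply Set.Subset.antisymm
  · have := word_set_subset S g⁻¹
    simpa using this
  · exact word_set_subset S g

variable {a b : ℝ}

lemma fix_endpoints (hab : a < b) {u : Equiv.Perm ℝ}
    (hb : Set.BijOn ⇑u (Icc a b) (Icc a b)) (hm : StrictMonoOn ⇑u (Icc a b)) :
    u a = a ∧ u b = b := by
  have ha : a ∈ Icc a b := left_mem_Icc.2 hab.le
  have hbb : b ∈ Icc a b := right_mem_Icc.2 hab.le
  constructor
  · obtain ⟨y, hy, hyu⟩ := hb.surjOn ha
    rcases eq_or_lt_of_le hy.1 with h | h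
    · rw [h, hyu]; exact h
    · exfalso
      have h1 : u a < u y := hm ha hy h
      have h2 : a ≤ u a := (hb.mapsTo ha).1
      rw [hyu] at h1; linarith
  · obtain ⟨y, hy, hyu⟩ := hb.surjOn hbb
    rcases eq_or_lt_of_le hy.2 with h | h
    · rw [← h, hyu]; exact h.symm
    · exfalso
      have h1 : u y < u b := hm hy hbb h
      have h2 : u b ≤ b := (hb.mapsTo hbb).2
      rw [hyu] at h1; linarith

lemma maps_Ioo (hab : a < b) {u : Equiv.Perm ℝ}
    (hb : Set.BijOn ⇑u (Icc a b) (Icc a b)) (hm : StrictMonoOn ⇑u (Icc a b)) :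
    Set.MapsTo ⇑u (Ioo a b) (Ioo a b) := by
  obtain ⟨hua, hub⟩ := fix_endpoints hab hb hm
  intro x hx
  have ha : a ∈ Icc a b := left_mem_Icc.2 hab.le
  have hbb : b ∈ Icc a b := right_mem_Icc.2 hab.le
  have hxI : x ∈ Icc a b := Ioo_subset_Icc_self hx
  constructor
  · have := hm ha hxI hx.1; rwa [hua] at this
  · have := hm hxI hbb hx.2; rwa [hub] at this

lemma inv_bijOn {u : Equiv.Perm ℝ} (hb : Set.BijOn ⇑u (Icc a b) (Icc a b)) :
    Set.BijOn ⇑u⁻¹ (Icc a b) (Icc a b) := by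
  refine Set.BijOn.symm ⟨fun x _ => u.apply_symm_apply x, fun x _ => u.symm_apply_apply x⟩ hb

lemma inv_strictMonoOn {u : Equiv.Perm ℝ}
    (hb : Set.BijOn ⇑u (Icc a b) (Icc a b)) (hm : StrictMonoOn ⇑u (Icc a b)) :
    StrictMonoOn ⇑u⁻¹ (Icc a b) := by
  have hbi := inv_bijOn (a := a) (b := b) hb
  intro x hx y hy hxy
  by_contra h
  push_neg at h
  have hx' : u⁻¹ x ∈ Icc a b := hbi.mapsTo hx
  have hy' : u⁻¹ y ∈ Icc a b := hbi.mapsTo hy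
  rcases eq_or_lt_of_le h with h1 | h1
  · have : u (u⁻¹ y) = u (u⁻¹ x) := by rw [h1]
    rw [show ∀ z, u (u⁻¹ z) = z from u.apply_symm_apply, show ∀ z, u (u⁻¹ z) = z from u.apply_symm_apply] at this
    linarith
  · have := hm hy' hx' h1
    rw [show ∀ z, u (u⁻¹ z) = z from u.apply_symm_apply, show ∀ z, u (u⁻¹ z) = z from u.apply_symm_apply] at this
    linarith

lemma hasDeriv_of_C1 (hab : a < b) {u : ℝ → ℝ} (hc : ContDiffOn ℝ 1 u (Icc a b))
    {x : ℝ} (hx : x ∈ Ioo a b) : HasDerivAt u (deriv u x) x := by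
  have h1 : Icc a b ∈ nhds x := Icc_mem_nhds hx.1 hx.2
  have h2 := ((hc.differentiableOn one_ne_zero) x (Ioo_subset_Icc_self hx)).differentiableAt h1
  exact h2.hasDerivAt

lemma deriv_nonneg_of_mono (hab : a < b) {u : ℝ → ℝ} (hm : StrictMonoOn u (Icc a b))
    {x d : ℝ} (hx : x ∈ Ioo a b) (hd : HasDerivAt u d x) : 0 ≤ d := by
  have h := hasDerivAt_iff_tendsto_slope.1 hd
  have h1 : Icc a b ∈ nhdsWithin x {x}ᶜ := nhdsWithin_le_nhds (Icc_mem_nhds hx.1 hx.2)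
  refine ge_of_tendsto h ?_
  filter_upwards [h1, self_mem_nhdsWithin] with y hy hy'
  have hyne : y ≠ x := by simpa using hy'
  have hxI : x ∈ Icc a b := Ioo_subset_Icc_self hx
  rw [slope_def_field]
  rcases lt_or_gt_of_ne hyne with hlt | hgt
  · have hu : u y < u x := hm hy hxI hlt
    have : (u y - u x) / (y - x) = (u x - u y) / (x - y) := by
      rw [← neg_sub (u x), ← neg_sub x y, neg_div_neg_eq]
    rw [this]
    apply div_nonneg <;> linarith
  · have hu : u x < u y := hm hxI hy hgt
    apply div_nonneg <;> linarith


lemma gen_props (hab : a < b) {S : Set (Equiv.Perm ℝ)}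
    (hbij : ∀ u ∈ S, Set.BijOn ⇑u (Icc a b) (Icc a b))
    (hmono : ∀ u ∈ S, StrictMonoOn ⇑u (Icc a b))
    {u : Equiv.Perm ℝ} (hu : u ∈ S ∨ u⁻¹ ∈ S) :
    Set.BijOn ⇑u (Icc a b) (Icc a b) ∧ StrictMonoOn ⇑u (Icc a b) := by
  rcases hu with hu | hu
  · exact ⟨hbij u hu, hmono u hu⟩
  · have h1 := hbij _ hu
    have h2 := hmono _ hu
    constructor
    · simpa using inv_bijOn h1
    · simpa using inv_strictMonoOn h1 h2

lemma exists_M (hab : a < b) {S : Set (Equiv.Perm ℝ)} (hS : S.Finite)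
    (hC1 : ∀ u ∈ S, ContDiffOn ℝ 1 ⇑u (Icc a b) ∧ ContDiffOn ℝ 1 ⇑u⁻¹ (Icc a b)) :
    ∃ M : ℝ, 2 ≤ M ∧ ∀ u ∈ S, ∀ x ∈ Ioo a b, |deriv ⇑u x| ≤ M ∧ |deriv ⇑u⁻¹ x| ≤ M := by
  have key : ∀ u ∈ S, ∃ C : ℝ, ∀ x ∈ Ioo a b, |deriv ⇑u x| ≤ C ∧ |deriv ⇑u⁻¹ x| ≤ C := by
    intro u hu
    obtain ⟨h1, h2⟩ := hC1 u hu
    have hud : ContinuousOn (derivWithin ⇑u (Icc a b)) (Icc a b) :=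
      h1.continuousOn_derivWithin (uniqueDiffOn_Icc hab) le_rfl
    have hud' : ContinuousOn (derivWithin ⇑u⁻¹ (Icc a b)) (Icc a b) :=
      h2.continuousOn_derivWithin (uniqueDiffOn_Icc hab) le_rfl
    obtain ⟨C1, hb1⟩ := isCompact_Icc.exists_bound_of_continuousOn hud
    obtain ⟨C2, hb2⟩ := isCompact_Icc.exists_bound_of_continuousOn hud'
    refine ⟨max C1 C2, fun x hx => ?_⟩
    have hmem : Icc a b ∈ nhds x := Icc_mem_nhds hx.1 hx.2
    have e1 : derivWithin ⇑u (Icc a b) x = deriv ⇑u x := derivWithin_of_mem_nhds hmem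
    have e2 : derivWithin ⇑u⁻¹ (Icc a b) x = deriv ⇑u⁻¹ x := derivWithin_of_mem_nhds hmem
    have hxI : x ∈ Icc a b := Ioo_subset_Icc_self hx
    have hb1' := hb1 x hxI
    have hb2' := hb2 x hxI
    rw [Real.norm_eq_abs, e1] at hb1'
    rw [Real.norm_eq_abs, e2] at hb2'
    exact ⟨hb1'.trans (le_max_left _ _), hb2'.trans (le_max_right _ _)⟩
  choose! C hC using key
  obtain ⟨M0, hM0⟩ := (hS.image C).bddAbove
  refine ⟨max M0 2, le_max_right _ _, fun u hu x hx => ?_⟩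
  have hCu : C u ≤ M0 := hM0 (Set.mem_image_of_mem C hu)
  exact ⟨((hC u hu x hx).1).trans (hCu.trans (le_max_left _ _)),
    ((hC u hu x hx).2).trans (hCu.trans (le_max_left _ _))⟩

lemma gen_deriv (hab : a < b) {S : Set (Equiv.Perm ℝ)}
    (hbij : ∀ u ∈ S, Set.BijOn ⇑u (Icc a b) (Icc a b))
    (hmono : ∀ u ∈ S, StrictMonoOn ⇑u (Icc a b))
    (hC1 : ∀ u ∈ S, ContDiffOn ℝ 1 ⇑u (Icc a b) ∧ ContDiffOn ℝ 1 ⇑u⁻¹ (Icc a b))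
    {M : ℝ} (hM2 : 2 ≤ M)
    (hM : ∀ u ∈ S, ∀ x ∈ Ioo a b, |deriv ⇑u x| ≤ M ∧ |deriv ⇑u⁻¹ x| ≤ M)
    {u : Equiv.Perm ℝ} (hu : u ∈ S ∨ u⁻¹ ∈ S) {x : ℝ} (hx : x ∈ Ioo a b) :
    u x ∈ Ioo a b ∧ HasDerivAt ⇑u (deriv ⇑u x) x ∧ M⁻¹ ≤ deriv ⇑u x := by
  have props : Set.BijOn ⇑u (Icc a b) (Icc a b) ∧ StrictMonoOn ⇑u (Icc a b) ∧
      ContDiffOn ℝ 1 ⇑u (Icc a b) ∧ ContDiffOn ℝ 1 ⇑u⁻¹ (Icc a b) ∧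
      (∀ y ∈ Ioo a b, |deriv ⇑u y| ≤ M ∧ |deriv ⇑u⁻¹ y| ≤ M) := by
    rcases hu with hu | hu
    · exact ⟨hbij u hu, hmono u hu, (hC1 u hu).1, (hC1 u hu).2, fun y hy => hM u hu y hy⟩
    · have h1 := hbij _ hu
      have h2 := hmono _ hu
      have h3 := hC1 _ hu
      have h4 := hM _ hu
      refine ⟨by simpa using inv_bijOn h1, by simpa using inv_strictMonoOn h1 h2,
        by simpa using h3.2, by simpa using h3.1, fun y hy => ?_⟩
      have h5 := h4 y hy
      simp only [inv_inv] at h5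
      exact ⟨h5.2, h5.1⟩
  obtain ⟨hbu, hmu, hcu, hcinv, hbd⟩ := props
  have hxJ : u x ∈ Ioo a b := maps_Ioo hab hbu hmu hx
  have hdu : HasDerivAt ⇑u (deriv ⇑u x) x := hasDeriv_of_C1 hab hcu hx
  have hdv : HasDerivAt ⇑u⁻¹ (deriv ⇑u⁻¹ (u x)) (u x) := hasDeriv_of_C1 hab hcinv hxJ
  have hcomp : HasDerivAt (⇑u⁻¹ ∘ ⇑u) (deriv ⇑u⁻¹ (u x) * deriv ⇑u x) x := hdv.comp x hdu
  have hid : (⇑u⁻¹ ∘ ⇑u) = id := by funext y; simp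
  rw [hid] at hcomp
  have h1 : deriv ⇑u⁻¹ (u x) * deriv ⇑u x = 1 := hcomp.unique (hasDerivAt_id x)
  have hnn : 0 ≤ deriv ⇑u x := deriv_nonneg_of_mono hab hmu hx hdu
  have hpos : 0 < deriv ⇑u x := by
    rcases hnn.lt_or_eq with h | h
    · exact h
    · exfalso; rw [← h, mul_zero] at h1; exact one_ne_zero h1.symm
  have hvle : deriv ⇑u⁻¹ (u x) ≤ M := (le_abs_self _).trans (hbd (u x) hxJ).2
  have hMpos : (0:ℝ) < M := by linarith
  refine ⟨hxJ, hdu, ?_⟩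
  have h2 : (1:ℝ) ≤ M * deriv ⇑u x := by nlinarith
  have h3 : M * M⁻¹ = 1 := mul_inv_cancel₀ hMpos.ne'
  nlinarith [h2, h3, hpos, hMpos]

lemma word_deriv (hab : a < b) {S : Set (Equiv.Perm ℝ)}
    (hbij : ∀ u ∈ S, Set.BijOn ⇑u (Icc a b) (Icc a b))
    (hmono : ∀ u ∈ S, StrictMonoOn ⇑u (Icc a b))
    (hC1 : ∀ u ∈ S, ContDiffOn ℝ 1 ⇑u (Icc a b) ∧ ContDiffOn ℝ 1 ⇑u⁻¹ (Icc a b))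
    {M : ℝ} (hM2 : 2 ≤ M)
    (hM : ∀ u ∈ S, ∀ x ∈ Ioo a b, |deriv ⇑u x| ≤ M ∧ |deriv ⇑u⁻¹ x| ≤ M) :
    ∀ l : List (Equiv.Perm ℝ), (∀ x ∈ l, x ∈ S ∨ x⁻¹ ∈ S) →
      ∀ x ∈ Ioo a b, l.prod x ∈ Ioo a b ∧
        ∃ d : ℝ, HasDerivAt ⇑l.prod d x ∧ (M⁻¹) ^ l.length ≤ d := by
  intro l
  induction l with
  | nil =>
    intro _ x hx
    refine ⟨by simpa using hx, 1, ?_, by simp⟩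
    have h : ⇑(List.prod ([] : List (Equiv.Perm ℝ))) = id := by simp
    rw [h]; exact hasDerivAt_id x
  | cons u t ih =>
    intro hl x hx
    obtain ⟨hxt, d, hd, hdle⟩ := ih (fun y hy => hl y (List.mem_cons_of_mem u hy)) x hx
    obtain ⟨hxu, hdu, hdule⟩ :=
      gen_deriv hab hbij hmono hC1 hM2 hM (hl u List.mem_cons_self) hxt
    have hco : ⇑(u :: t).prod = ⇑u ∘ ⇑t.prod := by
      rw [List.prod_cons, Equiv.Perm.coe_mul]
    have hMipos : (0:ℝ) < M⁻¹ := by positivity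
    have hdpos : 0 ≤ d := le_trans (pow_nonneg hMipos.le _) hdle
    refine ⟨?_, deriv ⇑u (t.prod x) * d, ?_, ?_⟩
    · show (u :: t).prod x ∈ Ioo a b
      rw [List.prod_cons, Equiv.Perm.mul_apply]; exact hxu
    · rw [hco]; exact HasDerivAt.comp x hdu hd
    · rw [List.length_cons, pow_succ]
      calc (M⁻¹) ^ t.length * M⁻¹ ≤ d * deriv ⇑u (t.prod x) :=
            mul_le_mul hdle hdule hMipos.le hdpos
        _ = deriv ⇑u (t.prod x) * d := mul_comm _ _

lemma word_mono (hab : a < b) {S : Set (Equiv.Perm ℝ)}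
    (hbij : ∀ u ∈ S, Set.BijOn ⇑u (Icc a b) (Icc a b))
    (hmono : ∀ u ∈ S, StrictMonoOn ⇑u (Icc a b)) :
    ∀ l : List (Equiv.Perm ℝ), (∀ x ∈ l, x ∈ S ∨ x⁻¹ ∈ S) →
      StrictMonoOn ⇑l.prod (Icc a b) ∧ Set.MapsTo ⇑l.prod (Icc a b) (Icc a b) ∧
        l.prod a = a ∧ l.prod b = b := by
  intro l
  induction l with
  | nil =>
    intro _
    refine ⟨?_, ?_, by simp, by simp⟩
    · intro x _ y _ h; simpa using h
    · intro x hx; simpa using hx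
  | cons u t ih =>
    intro hl
    obtain ⟨hmt, hmapt, hta, htb⟩ := ih (fun y hy => hl y (List.mem_cons_of_mem u hy))
    obtain ⟨hbu, hmu⟩ := gen_props hab hbij hmono (hl u List.mem_cons_self)
    obtain ⟨hua, hub⟩ := fix_endpoints hab hbu hmu
    have hco : ⇑(u :: t).prod = ⇑u ∘ ⇑t.prod := by
      rw [List.prod_cons, Equiv.Perm.coe_mul]
    refine ⟨?_, ?_, ?_, ?_⟩
    · rw [hco]; exact hmu.comp hmt hmapt
    · rw [hco]; exact hbu.mapsTo.comp hmapt
    · rw [List.prod_cons, Equiv.Perm.mul_apply, hta, hua]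
    · rw [List.prod_cons, Equiv.Perm.mul_apply, htb, hub]

lemma exists_small_gap (hab : a < b) (c : ℕ → ℝ) (hpos : ∀ n, c n < c (n + 1))
    (hbd : ∀ n, c n ∈ Ioo a b) (N : ℕ) :
    ∃ n : ℕ, N ≤ n ∧ 1 ≤ n ∧ (c (n + 1) - c n) * n ≤ c 1 - c 0 := by
  by_contra hcon
  push_neg at hcon
  set ℓ : ℕ → ℝ := fun n => c (n + 1) - c n with hℓ
  have hl : ∀ n, 0 < ℓ n := fun n => sub_pos.2 (hpos n)
  have hsum : Summable ℓ := by
    apply summable_of_sum_range_le (c := b - a) (fun n => (hl n).le)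
    intro n
    have hrw : ∑ i ∈ Finset.range n, ℓ i = c n - c 0 := Finset.sum_range_sub c n
    rw [hrw]
    have h1 := (hbd n).2
    have h2 := (hbd 0).1
    linarith
  set m := max N 1 with hm
  have hc10 : 0 < c 1 - c 0 := hl 0
  have h2 : Summable (fun k : ℕ => (c 1 - c 0)⁻¹ * ℓ (k + m)) :=
    (((summable_nat_add_iff m).2 hsum)).mul_left _
  have key : ∀ k : ℕ, (((k + m : ℕ) : ℝ))⁻¹ ≤ (c 1 - c 0)⁻¹ * ℓ (k + m) := by
    intro k
    have hk1 : 1 ≤ k + m := le_trans (le_max_right N 1) (Nat.le_add_left m k)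
    have hkN : N ≤ k + m := le_trans (le_max_left N 1) (Nat.le_add_left m k)
    have h5 := hcon (k + m) hkN hk1
    have hkpos : (0:ℝ) < ((k + m : ℕ) : ℝ) := by
      exact_mod_cast Nat.pos_of_ne_zero (by omega)
    rw [inv_eq_one_div, inv_mul_eq_div, div_le_div_iff₀ hkpos hc10]
    simp only [hℓ]
    push_cast
    push_cast at h5
    nlinarith [h5]
  have h4 : Summable (fun k : ℕ => (((k + m : ℕ) : ℝ))⁻¹) := by
    refine Summable.of_nonneg_of_le (fun k => by positivity) key h2
  exact Real.not_summable_natCast_inv ((summable_nat_add_iff m).1 h4)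


lemma core (hab : a < b) {S : Set (Equiv.Perm ℝ)} (hS : S.Finite)
    (hbij : ∀ u ∈ S, Set.BijOn ⇑u (Icc a b) (Icc a b))
    (hmono : ∀ u ∈ S, StrictMonoOn ⇑u (Icc a b))
    (hC1 : ∀ u ∈ S, ContDiffOn ℝ 1 ⇑u (Icc a b) ∧ ContDiffOn ℝ 1 ⇑u⁻¹ (Icc a b))
    (f : Equiv.Perm ℝ) (hf : f ∈ Subgroup.closure S)
    {x₀ : ℝ} (hx₀ : x₀ ∈ Ioo a b) (hlt : x₀ < f x₀) :
    ∃ A : ℝ, 0 < A ∧ ∀ N : ℕ, ∃ n : ℕ, N ≤ n ∧ 1 ≤ n ∧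
      A * Real.log n ≤ (wordLength S (f ^ n) : ℝ) := by
  obtain ⟨M, hM2, hM⟩ := exists_M hab hS hC1
  have hMpos : (0:ℝ) < M := by linarith
  -- monotonicity facts for f
  obtain ⟨lf, hlf, hlfp⟩ := exists_word hf
  obtain ⟨hfm, hfmap, hfa, hfb⟩ := word_mono hab hbij hmono lf hlf
  rw [hlfp] at hfm hfmap hfa hfb
  -- the orbit
  set c : ℕ → ℝ := fun n => (f ^ n) x₀ with hc
  have hc0 : c 0 = x₀ := by simp [hc]
  have hcsucc : ∀ n, c (n + 1) = f (c n) := by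
    intro n
    simp only [hc, pow_succ', Equiv.Perm.mul_apply]
  have hcJ : ∀ n, c n ∈ Ioo a b := by
    intro n
    induction n with
    | zero => rw [hc0]; exact hx₀
    | succ k ih =>
      rw [hcsucc]
      refine ⟨?_, ?_⟩
      · have := hfm (left_mem_Icc.2 hab.le) (Ioo_subset_Icc_self ih) ih.1
        rwa [hfa] at this
      · have := hfm (Ioo_subset_Icc_self ih) (right_mem_Icc.2 hab.le) ih.2
        rwa [hfb] at this
  have hcmono : ∀ n, c n < c (n + 1) := by
    intro n
    induction n with
    | zero => rw [hc0, hcsucc, hc0]; exact hlt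
    | succ k ih =>
      have h9 := hfm (Ioo_subset_Icc_self (hcJ k)) (Ioo_subset_Icc_self (hcJ (k + 1))) ih
      rwa [← hcsucc k, ← hcsucc (k + 1)] at h9
  have hc01 : c 0 < c 1 := hcmono 0
  -- the constant
  have hlogM : 0 < Real.log M := Real.log_pos (by linarith)
  refine ⟨(Real.log M)⁻¹, by positivity, fun N => ?_⟩
  obtain ⟨n, hnN, hn1, hgap⟩ := exists_small_gap hab c hcmono hcJ N
  refine ⟨n, hnN, hn1, ?_⟩
  set L : ℕ := wordLength S (f ^ n) with hLdef
  -- a word of length exactly L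
  have hWne : {k | ∃ l : List (Equiv.Perm ℝ), l.length = k ∧
      (∀ x ∈ l, x ∈ S ∨ x⁻¹ ∈ S) ∧ l.prod = f ^ n}.Nonempty := by
    obtain ⟨l₀, hl₀, hl₀p⟩ := exists_word (pow_mem hf n)
    exact ⟨l₀.length, l₀, rfl, hl₀, hl₀p⟩
  obtain ⟨l, hlen, hlmem, hlprod⟩ := Nat.sInf_mem hWne
  -- derivative facts for f ^ n
  have hgl : ⇑l.prod = ⇑(f ^ n) := by rw [hlprod]
  have hderiv : ∀ x ∈ Ioo a b,
      HasDerivAt ⇑(f ^ n) (deriv ⇑(f ^ n) x) x ∧ (M⁻¹) ^ L ≤ deriv ⇑(f ^ n) x := by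
    intro x hx
    obtain ⟨-, d, hd, hdle⟩ := word_deriv hab hbij hmono hC1 hM2 hM l hlmem x hx
    rw [hgl] at hd
    rw [hlen] at hdle
    constructor
    · rw [hd.deriv]; exact hd
    · rw [hd.deriv]; exact hdle
  -- mean value theorem on [c 0, c 1]
  have hIccJ : Icc (c 0) (c 1) ⊆ Ioo a b := fun y hy =>
    ⟨lt_of_lt_of_le (hcJ 0).1 hy.1, lt_of_le_of_lt hy.2 (hcJ 1).2⟩
  have hcont : ContinuousOn ⇑(f ^ n) (Icc (c 0) (c 1)) := fun x hx =>
    ((hderiv x (hIccJ hx)).1).continuousAt.continuousWithinAt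
  obtain ⟨ξ, hξ, hslope⟩ := exists_hasDerivAt_eq_slope ⇑(f ^ n) (deriv ⇑(f ^ n)) hc01 hcont
    (fun x hx => (hderiv x (hIccJ (Ioo_subset_Icc_self hx))).1)
  have hξJ : ξ ∈ Ioo a b := hIccJ (Ioo_subset_Icc_self hξ)
  have hg1 : (f ^ n) (c 1) = c (n + 1) := by
    show (f ^ n) ((f ^ 1) x₀) = (f ^ (n + 1)) x₀
    rw [← Equiv.Perm.mul_apply, ← pow_add]
  have hg0 : (f ^ n) (c 0) = c n := by
    show (f ^ n) ((f ^ 0) x₀) = (f ^ n) x₀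
    rw [pow_zero]; rfl
  rw [hg1, hg0] at hslope
  have hbound := (hderiv ξ hξJ).2
  rw [hslope] at hbound
  -- conclude (M⁻¹)^L ≤ 1/n
  have hnpos : (0:ℝ) < (n : ℝ) := by exact_mod_cast hn1
  have hl0 : 0 < c 1 - c 0 := sub_pos.2 hc01
  have h6 : (M⁻¹) ^ L ≤ ((n : ℝ))⁻¹ := by
    refine hbound.trans ?_
    rw [div_le_iff₀ hl0]
    have e2 : (n : ℝ) * ((n : ℝ))⁻¹ = 1 := mul_inv_cancel₀ hnpos.ne'
    nlinarith [hgap, e2, inv_nonneg.2 hnpos.le]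
  have hMLp : (0:ℝ) < M ^ L := pow_pos hMpos L
  have h7 : (n : ℝ) ≤ M ^ L := by
    rw [inv_pow] at h6
    have e1 : M ^ L * (M ^ L)⁻¹ = 1 := mul_inv_cancel₀ hMLp.ne'
    have e2 : (n : ℝ) * ((n : ℝ))⁻¹ = 1 := mul_inv_cancel₀ hnpos.ne'
    nlinarith [mul_le_mul_of_nonneg_left h6 (mul_pos hnpos hMLp).le]
  have h8 : Real.log n ≤ (L : ℝ) * Real.log M := by
    have := Real.log_le_log hnpos h7
    rwa [Real.log_pow] at this
  calc (Real.log M)⁻¹ * Real.log n ≤ (Real.log M)⁻¹ * ((L : ℝ) * Real.log M) :=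
        mul_le_mul_of_nonneg_left h8 (by positivity)
    _ = (L : ℝ) := by field_simp

end NSDaux

theorem no_superlogarithmic_distortion (a b : ℝ) (hab : a < b)
    (S : Set (Equiv.Perm ℝ)) (hS : S.Finite)
    (hbij : ∀ u ∈ S, Set.BijOn ⇑u (Set.Icc a b) (Set.Icc a b))
    (hmono : ∀ u ∈ S, StrictMonoOn ⇑u (Set.Icc a b))
    (hC1 : ∀ u ∈ S, ContDiffOn ℝ 1 ⇑u (Set.Icc a b) ∧ ContDiffOn ℝ 1 ⇑u⁻¹ (Set.Icc a b))
    (f : Equiv.Perm ℝ) (hf : f ∈ Subgroup.closure S)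
    (hnontriv : ∃ x ∈ Set.Icc a b, f x ≠ x) :
    ∃ A : ℝ, 0 < A ∧ ∀ N : ℕ, ∃ n : ℕ, N ≤ n ∧ 1 ≤ n ∧
      A * Real.log n ≤ (wordLength S (f ^ n) : ℝ) := by
  obtain ⟨x₀, hx₀I, hne⟩ := hnontriv
  obtain ⟨lf, hlf, hlfp⟩ := NSDaux.exists_word hf
  obtain ⟨hfm, hfmap, hfa, hfb⟩ := NSDaux.word_mono hab hbij hmono lf hlf
  rw [hlfp] at hfm hfmap hfa hfb
  have hx₀J : x₀ ∈ Set.Ioo a b := by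
    rcases eq_or_lt_of_le hx₀I.1 with h | h1
    · exfalso; apply hne; rw [← h]; exact hfa
    rcases eq_or_lt_of_le hx₀I.2 with h | h2
    · exfalso; apply hne; rw [h]; exact hfb
    exact ⟨h1, h2⟩
  rcases hne.lt_or_gt with hlt | hgt
  · -- f x₀ < x₀ : work with f⁻¹
    have hf' : f⁻¹ ∈ Subgroup.closure S := Subgroup.inv_mem _ hf
    obtain ⟨lg, hlg, hlgp⟩ := NSDaux.exists_word hf'
    obtain ⟨-, hgmap, -, -⟩ := NSDaux.word_mono hab hbij hmono lg hlg
    rw [hlgp] at hgmap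
    have hx₀lt : x₀ < f⁻¹ x₀ := by
      rcases lt_trichotomy (f⁻¹ x₀) x₀ with h | h | h
      · exfalso
        have h2 : f⁻¹ x₀ ∈ Set.Icc a b := hgmap hx₀I
        have h3 := hfm h2 hx₀I h
        rw [show f (f⁻¹ x₀) = x₀ from f.apply_symm_apply x₀] at h3
        linarith
      · exfalso; apply hne
        have h3 := congrArg ⇑f h
        rw [show f (f⁻¹ x₀) = x₀ from f.apply_symm_apply x₀] at h3
        exact h3.symm
      · exact h
    obtain ⟨A, hA, hcore⟩ := NSDaux.core hab hS hbij hmono hC1 f⁻¹ hf' hx₀J hx₀lt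
    refine ⟨A, hA, fun N => ?_⟩
    obtain ⟨n, hnN, hn1, hle⟩ := hcore N
    refine ⟨n, hnN, hn1, ?_⟩
    rwa [inv_pow, NSDaux.wordLength_inv] at hle
  · exact NSDaux.core hab hS hbij hmono hC1 f hf hx₀J hgt
end

section
/- For a nontrivial C¹ diffeomorphism f of a closed interval [a,b] (orientation-preserving, f ≠ Id), there exist an increasing sequence of positive integers n_k and points x_k ∈ [a,b] such that Df^{n_k}(x_k) ≥ n_k. -/
open Set Filter

private lemma ps_iter_eq (f : ℝ → ℝ) (y : ℕ → ℝ)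
    (hstep : ∀ k, f (y (k + 1)) = y k) :
    ∀ k j, f^[k] (y (j + k)) = y j := by
  intro k
  induction k with
  | zero => intro j; simp
  | succ k ih =>
    intro j
    have h : j + (k + 1) = (j + k) + 1 := by ring
    rw [h, Function.iterate_succ_apply, hstep, ih]

private lemma ps_aux (a b : ℝ) (hab : a < b) (f : ℝ → ℝ)
    (hmapsIcc : Set.MapsTo f (Set.Icc a b) (Set.Icc a b))
    (hmapsIoo : Set.MapsTo f (Set.Ioo a b) (Set.Ioo a b))
    (hcont : ContinuousOn f (Set.Icc a b))
    (hdiff : ∀ z ∈ Set.Ioo a b, DifferentiableAt ℝ f z)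
    (y : ℕ → ℝ) (hy : ∀ k, y k ∈ Set.Icc a b)
    (hstep : ∀ k, f (y (k + 1)) = y k)
    (hdir : (∀ k, y (k + 1) < y k) ∨ (∀ k, y k < y (k + 1))) :
    ∃ nk : ℕ → ℕ, StrictMono nk ∧ (∀ k, 0 < nk k) ∧
      ∃ xk : ℕ → ℝ, ∀ k, xk k ∈ Set.Icc a b ∧
        (nk k : ℝ) ≤ derivWithin (f^[nk k]) (Set.Icc a b) (xk k) := by
  -- lengths of the gaps
  set m : ℕ → ℝ := fun k => |y k - y (k + 1)| with hm_def
  have hmpos : ∀ k, 0 < m k := by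
    intro k
    rcases hdir with h | h
    · exact abs_pos.2 (sub_ne_zero.2 (h k).ne')
    · exact abs_pos.2 (sub_ne_zero.2 (h k).ne)
  -- iterates: continuity, differentiability
  have hiterC : ∀ n, ContinuousOn (f^[n]) (Set.Icc a b) := by
    intro n
    induction n with
    | zero => simpa using continuousOn_id
    | succ n ih =>
      rw [Function.iterate_succ']
      exact hcont.comp ih (hmapsIcc.iterate n)
  have hiterD : ∀ n, ∀ z ∈ Set.Ioo a b, DifferentiableAt ℝ (f^[n]) z := by
    intro n
    induction n with
    | zero => intro z _; simpa using differentiableAt_id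
    | succ n ih =>
      intro z hz
      rw [Function.iterate_succ']
      exact (hdiff _ (hmapsIoo.iterate n hz)).comp z (ih z hz)
  -- partial sums of m are bounded by b - a
  have hsumle : ∀ N, ∑ k ∈ Finset.range N, m k ≤ b - a := by
    intro N
    rcases hdir with h | h
    · have : ∀ k, m k = y k - y (k + 1) := fun k => abs_of_pos (sub_pos.2 (h k))
      calc ∑ k ∈ Finset.range N, m k = ∑ k ∈ Finset.range N, (y k - y (k + 1)) := by
            simp only [this]
        _ = y 0 - y N := Finset.sum_range_sub' y N
        _ ≤ b - a := sub_le_sub (hy 0).2 (hy N).1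
    · have : ∀ k, m k = y (k + 1) - y k := fun k => by
        show |y k - y (k + 1)| = _
        rw [abs_of_neg (sub_neg.2 (h k))]; ring
      calc ∑ k ∈ Finset.range N, m k = ∑ k ∈ Finset.range N, (y (k + 1) - y k) := by
            simp only [this]
        _ = y N - y 0 := Finset.sum_range_sub y N
        _ ≤ b - a := sub_le_sub (hy N).2 (hy 0).1
  have hsummable : Summable m := summable_of_sum_range_le (fun k => (hmpos k).le) hsumle
  -- infinitely many n with m n * n ≤ m 0
  have hfreq : ∃ᶠ n in atTop, 0 < n ∧ m n * n ≤ m 0 := by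
    by_contra hcon
    rw [not_frequently] at hcon
    have h1 : ∀ᶠ n : ℕ in atTop, 0 < n := eventually_gt_atTop 0
    have h2 : ∀ᶠ n : ℕ in atTop, m 0 < m n * n := by
      filter_upwards [hcon, h1] with n hn hn1
      push_neg at hn
      exact hn hn1
    obtain ⟨K, hK⟩ := (eventually_atTop).1 h2
    have hs1 : Summable (fun n : ℕ => m (n + K)) := (summable_nat_add_iff K).2 hsummable
    have hs2 : Summable (fun n : ℕ => m 0 / ((n : ℝ) + K)) := by
      apply Summable.of_nonneg_of_le (fun n => by positivity) _ hs1
      intro n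
      have hnK := hK (n + K) (Nat.le_add_left K n)
      push_cast at hnK
      have hpos : (0 : ℝ) < (n : ℝ) + K := by
        have := hmpos 0
        nlinarith [hmpos (n + K), (Nat.cast_nonneg (n + K) : (0:ℝ) ≤ (n + K : ℕ))]
      rw [div_le_iff₀ hpos]
      calc m 0 ≤ m (n + K) * ((n:ℝ) + K) := hnK.le
        _ = m (n + K) * ((n : ℝ) + K) := rfl
    have hs3 : Summable (fun n : ℕ => m 0 / (n : ℝ)) := by
      have h' : Summable (fun n : ℕ => m 0 / ((n + K : ℕ) : ℝ)) := by
        convert hs2 using 2 with n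
        push_cast
        ring
      exact (summable_nat_add_iff (f := fun n : ℕ => m 0 / (n : ℝ)) K).1 h'
    have hs4 : Summable (fun n : ℕ => 1 / (n : ℝ)) := by
      have h := hs3.mul_left (m 0)⁻¹
      refine h.congr fun n => ?_
      field_simp [(hmpos 0).ne']
    exact Real.not_summable_one_div_natCast hs4
  -- each good n produces a point with big derivative
  have hkey : ∀ n : ℕ, 0 < n ∧ m n * n ≤ m 0 →
      0 < n ∧ ∃ x ∈ Set.Icc a b, (n : ℝ) ≤ derivWithin (f^[n]) (Set.Icc a b) x := by
    rintro n ⟨hn, hmn⟩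
    refine ⟨hn, ?_⟩
    -- endpoints of the n-th gap
    obtain ⟨c, d, hcd, hcmem, hdmem, hfc, hfd, hmc, hm0⟩ :
        ∃ c d : ℝ, c < d ∧ c ∈ Set.Icc a b ∧ d ∈ Set.Icc a b ∧
          f^[n] c ∈ ({y 0, y 1} : Set ℝ) ∧ f^[n] d ∈ ({y 0, y 1} : Set ℝ) ∧
          d - c = m n ∧ f^[n] d - f^[n] c = m 0 := by
      have e1 : f^[n] (y n) = y 0 := by
        have := ps_iter_eq f y hstep n 0
        simpa using this
      have e2 : f^[n] (y (n + 1)) = y 1 := by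
        have := ps_iter_eq f y hstep n 1
        rwa [add_comm 1 n] at this
      rcases hdir with h | h
      · refine ⟨y (n + 1), y n, h n, hy _, hy _, ?_, ?_, ?_, ?_⟩
        · rw [e2]; simp
        · rw [e1]; simp
        · exact (abs_of_pos (sub_pos.2 (h n))).symm
        · rw [e1, e2]
          exact (abs_of_pos (sub_pos.2 (h 0))).symm
      · refine ⟨y n, y (n + 1), h n, hy _, hy _, ?_, ?_, ?_, ?_⟩
        · rw [e1]; simp
        · rw [e2]; simp
        · show _ = |y n - y (n + 1)|
          rw [abs_of_neg (sub_neg.2 (h n))]; ring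
        · rw [e1, e2]
          have : |y 0 - y (0 + 1)| = -(y 0 - y (0 + 1)) := abs_of_neg (sub_neg.2 (h 0))
          show y 1 - y 0 = |y 0 - y (0 + 1)|
          rw [this]; ring
    have hIccsub : Set.Icc c d ⊆ Set.Icc a b := Set.Icc_subset_Icc hcmem.1 hdmem.2
    have hIoosub : Set.Ioo c d ⊆ Set.Ioo a b := Set.Ioo_subset_Ioo hcmem.1 hdmem.2
    obtain ⟨ξ, hξ, hslope⟩ :=
      exists_hasDerivAt_eq_slope (f^[n]) (deriv (f^[n])) hcd
        ((hiterC n).mono hIccsub)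
        (fun z hz => (hiterD n z (hIoosub hz)).hasDerivAt)
    have hξab : ξ ∈ Set.Ioo a b := hIoosub hξ
    refine ⟨ξ, Set.Ioo_subset_Icc_self hξab, ?_⟩
    have hdw : derivWithin (f^[n]) (Set.Icc a b) ξ = deriv (f^[n]) ξ :=
      derivWithin_of_mem_nhds (Icc_mem_nhds hξab.1 hξab.2)
    rw [hdw, hslope, hm0]
    rw [le_div_iff₀ (by linarith : (0:ℝ) < d - c)]
    calc (n : ℝ) * (d - c) = (d - c) * n := by ring
      _ ≤ m 0 := by rw [hmc]; exact hmn
  -- extract a strictly monotone sequence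
  have hfreq2 : ∃ᶠ n : ℕ in atTop,
      0 < n ∧ ∃ x ∈ Set.Icc a b, (n : ℝ) ≤ derivWithin (f^[n]) (Set.Icc a b) x :=
    hfreq.mono hkey
  obtain ⟨φ, hφmono, hφ⟩ := extraction_of_frequently_atTop hfreq2
  choose hpos x hx hder using hφ
  exact ⟨φ, hφmono, hpos, x, fun k => ⟨hx k, hder k⟩⟩

theorem polterovich_sodin_large_derivative (a b : ℝ) (hab : a < b) (f : ℝ → ℝ)
    (hbij : Set.BijOn f (Set.Icc a b) (Set.Icc a b))
    (hmono : StrictMonoOn f (Set.Icc a b))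
    (hC1 : ContDiffOn ℝ 1 f (Set.Icc a b))
    (hnontriv : ∃ x ∈ Set.Icc a b, f x ≠ x) :
    ∃ nk : ℕ → ℕ, StrictMono nk ∧ (∀ k, 0 < nk k) ∧
      ∃ xk : ℕ → ℝ, ∀ k, xk k ∈ Set.Icc a b ∧
        (nk k : ℝ) ≤ derivWithin (f^[nk k]) (Set.Icc a b) (xk k) := by
  obtain ⟨x, hx, hfx⟩ := hnontriv
  have haI : a ∈ Set.Icc a b := ⟨le_rfl, hab.le⟩
  have hbI : b ∈ Set.Icc a b := ⟨hab.le, le_rfl⟩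
  -- f fixes endpoints
  have hfa : f a = a := by
    obtain ⟨z, hz, hfz⟩ := hbij.surjOn haI
    rcases eq_or_lt_of_le hz.1 with h | h
    · rw [← h] at hfz; exact hfz
    · have h1 : f a < f z := hmono haI hz h
      have h2 : a ≤ f a := (hbij.mapsTo haI).1
      rw [hfz] at h1; linarith
  have hfb : f b = b := by
    obtain ⟨z, hz, hfz⟩ := hbij.surjOn hbI
    rcases eq_or_lt_of_le hz.2 with h | h
    · rw [h] at hfz; exact hfz
    · have h1 : f z < f b := hmono hz hbI h
      have h2 : f b ≤ b := (hbij.mapsTo hbI).2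
      rw [hfz] at h1; linarith
  have hmapsIoo : Set.MapsTo f (Set.Ioo a b) (Set.Ioo a b) := by
    intro z hz
    have hzI : z ∈ Set.Icc a b := Set.Ioo_subset_Icc_self hz
    have h1 : f z ∈ Set.Icc a b := hbij.mapsTo hzI
    constructor
    · rcases eq_or_lt_of_le h1.1 with h | h
      · exfalso
        have : z = a := hbij.injOn hzI haI (by rw [← h, hfa])
        exact hz.1.ne' this
      · exact h
    · rcases eq_or_lt_of_le h1.2 with h | h
      · exfalso
        have : z = b := hbij.injOn hzI hbI (by rw [h, hfb])
        exact hz.2.ne this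
      · exact h
  have hdiff : ∀ z ∈ Set.Ioo a b, DifferentiableAt ℝ f z := by
    intro z hz
    have := (hC1.differentiableOn one_ne_zero) z (Set.Ioo_subset_Icc_self hz)
    exact this.differentiableAt (Icc_mem_nhds hz.1 hz.2)
  -- backward orbit
  set g : ℝ → ℝ := fun t => Function.invFunOn f (Set.Icc a b) t with hg_def
  have hginv : ∀ t ∈ Set.Icc a b, g t ∈ Set.Icc a b ∧ f (g t) = t := by
    intro t ht
    have hex : ∃ z ∈ Set.Icc a b, f z = t := hbij.surjOn ht
    exact ⟨Function.invFunOn_mem hex, Function.invFunOn_eq hex⟩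
  set y : ℕ → ℝ := fun k => g^[k] x with hy_def
  have hy : ∀ k, y k ∈ Set.Icc a b := by
    intro k
    induction k with
    | zero => exact hx
    | succ k ih =>
      have : y (k + 1) = g (y k) := Function.iterate_succ_apply' g k x
      rw [this]
      exact (hginv _ ih).1
  have hstep : ∀ k, f (y (k + 1)) = y k := by
    intro k
    have : y (k + 1) = g (y k) := Function.iterate_succ_apply' g k x
    rw [this]
    exact (hginv _ (hy k)).2
  have hy0 : y 0 = x := rfl
  have hdir : (∀ k, y (k + 1) < y k) ∨ (∀ k, y k < y (k + 1)) := by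
    rcases lt_or_gt_of_ne hfx with hlt | hgt
    · -- f x < x : y increasing
      right
      have hbase : y 0 < y 1 := by
        by_contra hcon
        push_neg at hcon
        have := hmono.monotoneOn (hy 1) (hy 0) hcon
        rw [hstep 0, hy0] at this
        linarith
      intro k
      induction k with
      | zero => exact hbase
      | succ k ih =>
        by_contra hcon
        push_neg at hcon
        have := hmono.monotoneOn (hy (k + 2)) (hy (k + 1)) hcon
        rw [hstep (k + 1), hstep k] at this
        linarith
    · -- x < f x : y decreasing
      left
      have hbase : y 1 < y 0 := by
        by_contra hcon
        push_neg at hcon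
        have := hmono.monotoneOn (hy 0) (hy 1) hcon
        rw [hstep 0, hy0] at this
        linarith
      intro k
      induction k with
      | zero => exact hbase
      | succ k ih =>
        by_contra hcon
        push_neg at hcon
        have := hmono.monotoneOn (hy (k + 1)) (hy (k + 2)) hcon
        rw [hstep (k + 1), hstep k] at this
        linarith
  exact ps_aux a b hab f hbij.mapsTo hmapsIoo hC1.continuousOn hdiff y hy hstep hdir
end

section
/- If a C^{1+bv} diffeomorphism f of [0,1] is distorted in the group of C^{1+bv} diffeomorphisms of [0,1], then its asymptotic distortion vanishes: lim_{n→∞} var(log Df^n)/n = 0. -/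
open Filter Topology
open scoped ENNReal

/-- Total variation of the logarithm of the derivative of `h`, as a map of `[0,1]`. -/
noncomputable def varLogDeriv (h : ℝ → ℝ) : ENNReal :=
  eVariationOn (fun x => Real.log (derivWithin h (Set.Icc (0 : ℝ) 1) x)) (Set.Icc 0 1)

open Set in
/-- A "good" permutation of `ℝ`: restricts to an increasing `C^1` diffeo of `[0,1]`. -/
def GoodPerm (u : Equiv.Perm ℝ) : Prop :=
  Set.BijOn ⇑u (Set.Icc (0 : ℝ) 1) (Set.Icc 0 1) ∧
  StrictMonoOn ⇑u (Set.Icc (0 : ℝ) 1) ∧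
  DifferentiableOn ℝ ⇑u (Set.Icc (0 : ℝ) 1) ∧
  ∀ x ∈ Set.Icc (0 : ℝ) 1, 0 < derivWithin ⇑u (Set.Icc (0 : ℝ) 1) x

open Set

lemma goodPerm_one : GoodPerm 1 := by
  have hid : ⇑(1 : Equiv.Perm ℝ) = id := rfl
  refine ⟨hid ▸ Set.bijOn_id _, ?_, ?_, ?_⟩
  · rw [hid]; exact fun x _ y _ h => h
  · rw [hid]; exact differentiableOn_id
  · intro x hx
    rw [hid, derivWithin_id x _ (uniqueDiffOn_Icc zero_lt_one x hx)]
    exact zero_lt_one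

lemma varLogDeriv_one : varLogDeriv ⇑(1 : Equiv.Perm ℝ) = 0 := by
  unfold varLogDeriv
  have h : EqOn (fun x => Real.log (derivWithin ⇑(1 : Equiv.Perm ℝ) (Set.Icc (0:ℝ) 1) x))
      (fun _ => (0:ℝ)) (Set.Icc (0:ℝ) 1) := by
    intro x hx
    have hid : ⇑(1 : Equiv.Perm ℝ) = id := rfl
    simp only [hid, derivWithin_id x _ (uniqueDiffOn_Icc zero_lt_one x hx), Real.log_one]
  rw [eVariationOn.eq_of_eqOn h]
  apply eVariationOn.constant_on
  intro a ha b hb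
  obtain ⟨x, -, rfl⟩ := ha
  obtain ⟨y, -, rfl⟩ := hb
  rfl

lemma eVariationOn_add_le (f g : ℝ → ℝ) (s : Set ℝ) :
    eVariationOn (f + g) s ≤ eVariationOn f s + eVariationOn g s := by
  refine iSup_le fun p => ?_
  calc ∑ i ∈ Finset.range p.1, edist ((f + g) (p.2.1 (i + 1))) ((f + g) (p.2.1 i))
      ≤ ∑ i ∈ Finset.range p.1,
        (edist (f (p.2.1 (i + 1))) (f (p.2.1 i)) + edist (g (p.2.1 (i + 1))) (g (p.2.1 i))) :=
        Finset.sum_le_sum fun i _ => edist_add_add_le _ _ _ _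
    _ = (∑ i ∈ Finset.range p.1, edist (f (p.2.1 (i + 1))) (f (p.2.1 i))) +
        ∑ i ∈ Finset.range p.1, edist (g (p.2.1 (i + 1))) (g (p.2.1 i)) :=
        Finset.sum_add_distrib
    _ ≤ _ := add_le_add (eVariationOn.sum_le (f := f) p.2.2.1 p.2.2.2)
        (eVariationOn.sum_le (f := g) p.2.2.1 p.2.2.2)

lemma goodPerm_mul {u v : Equiv.Perm ℝ} (hu : GoodPerm u) (hv : GoodPerm v) :
    GoodPerm (u * v) := by
  obtain ⟨hub, hum, hud, hup⟩ := hu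
  obtain ⟨hvb, hvm, hvd, hvp⟩ := hv
  have hcoe : ⇑(u * v) = ⇑u ∘ ⇑v := rfl
  refine ⟨hcoe ▸ hub.comp hvb, ?_, ?_, ?_⟩
  · rw [hcoe]; exact hum.comp hvm hvb.mapsTo
  · rw [hcoe]; exact hud.comp hvd hvb.mapsTo
  · intro x hx
    rw [hcoe, derivWithin_comp (x := x) (hud _ (hvb.mapsTo hx)) (hvd x hx) hvb.mapsTo]
    exact mul_pos (hup _ (hvb.mapsTo hx)) (hvp x hx)

lemma varLogDeriv_mul_le {u v : Equiv.Perm ℝ} (hu : GoodPerm u) (hv : GoodPerm v) :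
    varLogDeriv ⇑(u * v) ≤ varLogDeriv ⇑u + varLogDeriv ⇑v := by
  obtain ⟨hub, hum, hud, hup⟩ := hu
  obtain ⟨hvb, hvm, hvd, hvp⟩ := hv
  have hcoe : ⇑(u * v) = ⇑u ∘ ⇑v := rfl
  have key : EqOn (fun x => Real.log (derivWithin (⇑(u * v)) (Set.Icc (0:ℝ) 1) x))
      ((fun x => Real.log (derivWithin ⇑u (Set.Icc (0:ℝ) 1) (v x))) +
        fun x => Real.log (derivWithin ⇑v (Set.Icc (0:ℝ) 1) x)) (Set.Icc (0:ℝ) 1) := by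
    intro x hx
    have hdc : derivWithin (⇑u ∘ ⇑v) (Set.Icc (0:ℝ) 1) x
        = derivWithin ⇑u (Set.Icc 0 1) (v x) * derivWithin ⇑v (Set.Icc 0 1) x :=
      derivWithin_comp (x := x) (hud _ (hvb.mapsTo hx)) (hvd x hx) hvb.mapsTo
    simp only [Pi.add_apply, hcoe, hdc,
      Real.log_mul (ne_of_gt (hup _ (hvb.mapsTo hx))) (ne_of_gt (hvp x hx))]
  unfold varLogDeriv
  rw [eVariationOn.eq_of_eqOn key]
  refine le_trans (eVariationOn_add_le _ _ _) (add_le_add ?_ le_rfl)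
  have := eVariationOn.comp_le_of_monotoneOn
    (fun y => Real.log (derivWithin ⇑u (Set.Icc (0:ℝ) 1) y)) ⇑v hvm.monotoneOn hvb.mapsTo
  exact this

lemma goodPerm_inv {u : Equiv.Perm ℝ} (hu : GoodPerm u) : GoodPerm u⁻¹ := by
  obtain ⟨hub, hum, hud, hup⟩ := hu
  have hinv : ⇑u⁻¹ = ⇑u.symm := rfl
  have hb' : Set.BijOn ⇑u.symm (Set.Icc (0:ℝ) 1) (Set.Icc 0 1) := by
    refine ⟨fun y hy => ?_, u.symm.injective.injOn, fun x hx => ?_⟩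
    · obtain ⟨x, hx, rfl⟩ := hub.surjOn hy
      simpa using hx
    · exact ⟨u x, hub.mapsTo hx, by simp⟩
  have hm' : StrictMonoOn ⇑u.symm (Set.Icc (0:ℝ) 1) := by
    intro y1 h1 y2 h2 h12
    by_contra h
    push_neg at h
    have := hum.monotoneOn (hb'.mapsTo h2) (hb'.mapsTo h1) h
    simp only [Equiv.apply_symm_apply] at this
    exact absurd h12 (not_lt.2 this)
  -- continuity of the inverse on [0,1]
  have hcont : ContinuousOn ⇑u.symm (Set.Icc (0:ℝ) 1) := by
    let E : (Set.Icc (0:ℝ) 1 : Set ℝ) ≃o (Set.Icc (0:ℝ) 1 : Set ℝ) :=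
      (StrictMonoOn.orderIso ⇑u _ hum).trans (OrderIso.setCongr _ _ hub.image_eq)
    have h2 : ∀ y : (Set.Icc (0:ℝ) 1 : Set ℝ), (E y : ℝ) = u y := fun y => rfl
    rw [continuousOn_iff_continuous_restrict]
    have hres : Set.restrict (Set.Icc (0:ℝ) 1) ⇑u.symm = fun x => (E.symm x : ℝ) := by
      funext x
      have h1 : (E (E.symm x) : ℝ) = (x : ℝ) := by rw [E.apply_symm_apply]
      have h3 : u (E.symm x) = (x : ℝ) := by rw [← h2]; exact h1
      show u.symm (x : ℝ) = _
      rw [← h3]; simp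
    refine (congrArg Continuous hres).mpr ?_
    exact continuous_subtype_val.comp E.symm.continuous
  -- derivative of the inverse
  have hder : ∀ y ∈ Set.Icc (0:ℝ) 1, HasDerivWithinAt ⇑u.symm
      ((derivWithin ⇑u (Set.Icc (0:ℝ) 1) (u.symm y))⁻¹) (Set.Icc 0 1) y := by
    intro y hy
    set b := u.symm y with hb
    have hbI : b ∈ Set.Icc (0:ℝ) 1 := hb'.mapsTo hy
    have hslope : Tendsto (slope ⇑u b) (𝓝[Set.Icc (0:ℝ) 1 \ {b}] b)
        (𝓝 (derivWithin ⇑u (Set.Icc 0 1) b)) :=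
      hasDerivWithinAt_iff_tendsto_slope.1 (hud b hbI).hasDerivWithinAt
    have hinv0 : Tendsto (fun x => (slope ⇑u b x)⁻¹) (𝓝[Set.Icc (0:ℝ) 1 \ {b}] b)
        (𝓝 (derivWithin ⇑u (Set.Icc 0 1) b)⁻¹) := hslope.inv₀ (ne_of_gt (hup b hbI))
    have hgt : Tendsto (⇑u.symm) (𝓝[Set.Icc (0:ℝ) 1 \ {y}] y) (𝓝[Set.Icc (0:ℝ) 1 \ {b}] b) := by
      rw [tendsto_nhdsWithin_iff]
      constructor
      · exact (hcont y hy).mono Set.diff_subset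
      · filter_upwards [self_mem_nhdsWithin] with x hx
        refine ⟨hb'.mapsTo hx.1, ?_⟩
        simp only [Set.mem_singleton_iff]
        intro hxb
        apply hx.2
        have : u (u.symm x) = u b := by rw [hxb]
        simpa [hb] using this
    have hsl : ∀ x ∈ Set.Icc (0:ℝ) 1 \ {y}, (slope ⇑u b (u.symm x))⁻¹ = slope ⇑u.symm y x := by
      intro x hx
      rw [slope_def_field, slope_def_field, hb]
      rw [Equiv.apply_symm_apply, Equiv.apply_symm_apply, inv_div]
    rw [hasDerivWithinAt_iff_tendsto_slope]
    refine (hinv0.comp hgt).congr' ?_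
    filter_upwards [self_mem_nhdsWithin] with x hx
    exact hsl x hx
  refine ⟨hinv ▸ hb', hinv ▸ hm', ?_, ?_⟩
  · rw [hinv]; exact fun y hy => ((hder y hy).differentiableWithinAt).mono le_rfl
  · intro y hy
    have := (hder y hy).derivWithin (uniqueDiffOn_Icc zero_lt_one y hy)
    rw [hinv, this]
    exact inv_pos.2 (hup _ (hb'.mapsTo hy))

lemma goodPerm_list_prod {C : ℝ≥0∞} (l : List (Equiv.Perm ℝ))
    (h : ∀ x ∈ l, GoodPerm x ∧ varLogDeriv ⇑x ≤ C) :
    GoodPerm l.prod ∧ varLogDeriv ⇑l.prod ≤ l.length * C := by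
  induction l with
  | nil =>
      simp only [List.prod_nil, List.length_nil, Nat.cast_zero, zero_mul]
      exact ⟨goodPerm_one, le_of_eq varLogDeriv_one⟩
  | cons a t ih =>
      have ha := h a (List.mem_cons_self)
      have ht := ih fun x hx => h x (List.mem_cons_of_mem a hx)
      rw [List.prod_cons]
      refine ⟨goodPerm_mul ha.1 ht.1, ?_⟩
      calc varLogDeriv ⇑(a * t.prod) ≤ varLogDeriv ⇑a + varLogDeriv ⇑t.prod :=
            varLogDeriv_mul_le ha.1 ht.1
        _ ≤ C + (t.length : ℝ≥0∞) * C := add_le_add ha.2 ht.2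
        _ = ((a :: t).length : ℝ≥0∞) * C := by
            rw [List.length_cons]
            push_cast
            ring

theorem asymptotic_distortion_vanishes_of_distorted (S : Set (Equiv.Perm ℝ)) (hS : S.Finite)
    (hgen : ∀ u ∈ S,
      Set.BijOn ⇑u (Set.Icc (0 : ℝ) 1) (Set.Icc 0 1) ∧
      StrictMonoOn ⇑u (Set.Icc (0 : ℝ) 1) ∧
      DifferentiableOn ℝ ⇑u (Set.Icc (0 : ℝ) 1) ∧
      (∀ x ∈ Set.Icc (0 : ℝ) 1, 0 < derivWithin ⇑u (Set.Icc (0 : ℝ) 1) x) ∧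
      varLogDeriv ⇑u ≠ ⊤ ∧ varLogDeriv ⇑u⁻¹ ≠ ⊤)
    (f : Equiv.Perm ℝ) (hf : f ∈ Subgroup.closure S)
    (hdist : Tendsto (fun n : ℕ => (wordLength S (f ^ n) : ℝ) / n) atTop (nhds 0)) :
    Tendsto (fun n : ℕ => (varLogDeriv ⇑(f ^ n)).toReal / n) atTop (nhds 0) := by
  classical
  set C : ℝ≥0∞ := hS.toFinset.sup (fun u => max (varLogDeriv ⇑u) (varLogDeriv ⇑u⁻¹)) with hC
  have hCtop : C ≠ ⊤ := by
    rw [← lt_top_iff_ne_top, hC, Finset.sup_lt_iff (by exact ENNReal.zero_lt_top)]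
    intro u hu
    rw [Set.Finite.mem_toFinset] at hu
    obtain ⟨-, -, -, -, h1, h2⟩ := hgen u hu
    exact max_lt h1.lt_top h2.lt_top
  have hGood : ∀ x : Equiv.Perm ℝ, (x ∈ S ∨ x⁻¹ ∈ S) →
      GoodPerm x ∧ varLogDeriv ⇑x ≤ C := by
    rintro x (hx | hx)
    · obtain ⟨h1, h2, h3, h4, h5, h6⟩ := hgen x hx
      refine ⟨⟨h1, h2, h3, h4⟩, ?_⟩
      have h7 := Finset.le_sup (f := fun u : Equiv.Perm ℝ => max (varLogDeriv ⇑u) (varLogDeriv ⇑u⁻¹))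
        (hS.mem_toFinset.2 hx)
      exact le_trans (le_max_left _ _) h7
    · obtain ⟨h1, h2, h3, h4, h5, h6⟩ := hgen x⁻¹ hx
      have hg : GoodPerm (x⁻¹)⁻¹ := goodPerm_inv ⟨h1, h2, h3, h4⟩
      rw [inv_inv] at hg
      refine ⟨hg, ?_⟩
      have h7 := Finset.le_sup (f := fun u : Equiv.Perm ℝ => max (varLogDeriv ⇑u) (varLogDeriv ⇑u⁻¹))
        (hS.mem_toFinset.2 hx)
      simp only [inv_inv] at h7
      exact le_trans (le_max_right _ _) h7
  -- the defining set of the word length is nonempty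
  have hne : ∀ n : ℕ, {m | ∃ l : List (Equiv.Perm ℝ), l.length = m ∧
      (∀ x ∈ l, x ∈ S ∨ x⁻¹ ∈ S) ∧ l.prod = f ^ n}.Nonempty := by
    intro n
    have hfn : f ^ n ∈ Subgroup.closure S := Subgroup.pow_mem _ hf n
    have hfn' : f ^ n ∈ Submonoid.closure (S ∪ S⁻¹) := by
      rw [← Subgroup.closure_toSubmonoid]
      exact hfn
    obtain ⟨l, hl1, hl2⟩ := Submonoid.exists_list_of_mem_closure hfn'
    exact ⟨l.length, l, rfl, fun x hx => by
      rcases hl1 x hx with h | h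
      · exact Or.inl h
      · exact Or.inr (Set.mem_inv.1 h), hl2⟩
  -- key bound
  have hbound : ∀ n : ℕ, (varLogDeriv ⇑(f ^ n)).toReal ≤ (wordLength S (f ^ n) : ℝ) * C.toReal := by
    intro n
    obtain ⟨l, hlen, hlmem, hlprod⟩ := Nat.sInf_mem (hne n)
    have hb := (goodPerm_list_prod l fun x hx => hGood x (hlmem x hx)).2
    rw [hlprod, hlen] at hb
    have hfin : ((wordLength S (f ^ n) : ℝ≥0∞) * C) ≠ ⊤ :=
      ENNReal.mul_ne_top (ENNReal.natCast_ne_top _) hCtop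
    have := ENNReal.toReal_mono hfin hb
    rwa [ENNReal.toReal_mul, ENNReal.toReal_natCast] at this
  -- squeeze
  have hsq : Tendsto (fun n : ℕ => ((wordLength S (f ^ n) : ℝ) / n) * C.toReal)
      atTop (nhds 0) := by
    simpa using hdist.mul_const C.toReal
  refine squeeze_zero (fun n => div_nonneg ENNReal.toReal_nonneg (Nat.cast_nonneg n))
    (fun n => ?_) hsq
  rw [div_eq_mul_inv]
  calc (varLogDeriv ⇑(f ^ n)).toReal * (n : ℝ)⁻¹
      ≤ ((wordLength S (f ^ n) : ℝ) * C.toReal) * (n : ℝ)⁻¹ :=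
        mul_le_mul_of_nonneg_right (hbound n) (by positivity)
    _ = ((wordLength S (f ^ n) : ℝ) / n) * C.toReal := by ring
end
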